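/- Being D is a Whitney property: if X is a D-continuum, μ : C(X) → [0, μ(X)] is a Whitney map, and t ∈ (0, μ(X)), then the Whitney level μ⁻¹(t), regarded as a subspace of C(X) with the Hausdorff metric, is a D-continuum. -/

import Mathlib

open TopologicalSpace

/-- A topological space is a *D-space* if for every pair of disjoint nondegenerate
subcontinua `A, B` there is a subcontinuum `C` meeting both `A` and `B` with
`(A ∪ B) \ C ≠ ∅`. -/
def DSpace (X : Type*) [TopologicalSpace X] : Prop :=
  ∀ A B : Set X, IsCompact A → IsConnected A → A.Nontrivial →
    IsCompact B → IsConnected B → B.Nontrivial → Disjoint A B →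
    ∃ C : Set X, IsCompact C ∧ IsConnected C ∧
      (A ∩ C).Nonempty ∧ (B ∩ C).Nonempty ∧ ((A ∪ B) \ C).Nonempty

/-- The hyperspace `C(X)` of all subcontinua of `X`, i.e. nonempty compact connected
subsets, with the Hausdorff metric. -/
abbrev Hyperspace (X : Type*) [MetricSpace X] : Type _ :=
  {K : NonemptyCompacts X // IsConnected (K : Set X)}

namespace DWhitney

open Set Metric Filter

set_option linter.unusedSectionVars false

variable {X : Type*} [MetricSpace X] [CompactSpace X]

/-- The underlying set of an element of the hyperspace. -/
abbrev cs (A : Hyperspace X) : Set X := (A.1 : Set X)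

lemma cs_compact (A : Hyperspace X) : IsCompact (cs A) := A.1.isCompact

lemma cs_conn (A : Hyperspace X) : IsConnected (cs A) := A.2

lemma cs_ne (A : Hyperspace X) : (cs A).Nonempty := A.1.nonempty

lemma cs_closed (A : Hyperspace X) : IsClosed (cs A) := A.1.isCompact.isClosed

/-- Constructor. -/
def mkH (S : Set X) (hc : IsCompact S) (hconn : IsConnected S) : Hyperspace X :=
  ⟨⟨⟨S, hc⟩, hconn.nonempty⟩, hconn⟩

@[simp] lemma cs_mkH (S : Set X) (hc : IsCompact S) (hconn : IsConnected S) :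
    cs (mkH S hc hconn) = S := rfl

lemma hext {A B : Hyperspace X} (h : cs A = cs B) : A = B := by
  apply Subtype.ext; exact NonemptyCompacts.ext h

lemma hdist_eq (A B : Hyperspace X) : dist A B = hausdorffDist (cs A) (cs B) := rfl

lemma hedist_ne_top (A B : Hyperspace X) :
    EMetric.hausdorffEdist (cs A) (cs B) ≠ ⊤ :=
  hausdorffEdist_ne_top_of_nonempty_of_bounded (cs_ne A) (cs_ne B)
    (cs_compact A).isBounded (cs_compact B).isBounded

/-- the singleton element -/
def pointH (x : X) : Hyperspace X := mkH {x} isCompact_singleton isConnected_singleton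

@[simp] lemma cs_pointH (x : X) : cs (pointH x) = {x} := rfl

lemma infDist_le_dist {x : X} {A B : Hyperspace X} (hx : x ∈ cs A) :
    infDist x (cs B) ≤ dist A B :=
  infDist_le_hausdorffDist_of_mem hx (hedist_ne_top A B)

/-- H1 : membership passes to limits. -/
lemma mem_limit {F : ℕ → Hyperspace X} {A : Hyperspace X}
    (hF : Tendsto F atTop (nhds A)) {x : ℕ → X} (hx : ∀ n, x n ∈ cs (F n))
    {y : X} (hy : Tendsto x atTop (nhds y)) : y ∈ cs A := by
  have h1 : Tendsto (fun n => infDist (x n) (cs A)) atTop (nhds 0) := by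
    have hb : ∀ n, infDist (x n) (cs A) ≤ dist (F n) A := fun n => infDist_le_dist (hx n)
    have h0 : ∀ n, 0 ≤ infDist (x n) (cs A) := fun n => infDist_nonneg
    have hd : Tendsto (fun n => dist (F n) A) atTop (nhds 0) :=
      tendsto_iff_dist_tendsto_zero.1 hF
    exact squeeze_zero h0 hb hd
  have h2 : Tendsto (fun n => infDist (x n) (cs A)) atTop (nhds (infDist y (cs A))) :=
    (continuous_infDist_pt (cs A)).continuousAt.tendsto.comp hy
  have : infDist y (cs A) = 0 := tendsto_nhds_unique h2 h1
  exact ((cs_closed A).mem_iff_infDist_zero (cs_ne A)).2 this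

/-- constant-point version of H1. -/
lemma mem_limit_const {F : ℕ → Hyperspace X} {A : Hyperspace X}
    (hF : Tendsto F atTop (nhds A)) {y : X} (hy : ∀ n, y ∈ cs (F n)) : y ∈ cs A :=
  mem_limit hF hy tendsto_const_nhds

/-- H2 : approximating sequences of a point in the limit. -/
lemma exists_tendsto_of_mem {F : ℕ → Hyperspace X} {A : Hyperspace X}
    (hF : Tendsto F atTop (nhds A)) {y : X} (hy : y ∈ cs A) :
    ∃ x : ℕ → X, (∀ n, x n ∈ cs (F n)) ∧ Tendsto x atTop (nhds y) := by
  have hch : ∀ n : ℕ, ∃ z ∈ cs (F n), infDist y (cs (F n)) = dist y z := fun n =>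
    (cs_compact (F n)).exists_infDist_eq_dist (cs_ne (F n)) y
  choose x hx hxd using hch
  refine ⟨x, hx, ?_⟩
  rw [tendsto_iff_dist_tendsto_zero]
  have hb : ∀ n, dist (x n) y ≤ dist (F n) A := by
    intro n
    rw [dist_comm, ← hxd n]
    calc infDist y (cs (F n)) ≤ infDist y (cs A) + hausdorffDist (cs A) (cs (F n)) :=
          infDist_le_infDist_add_hausdorffDist (hedist_ne_top A (F n))
    _ = dist (F n) A := by
        rw [infDist_zero_of_mem hy, dist_comm, hdist_eq]; ring_nf
  exact squeeze_zero (fun n => dist_nonneg) hb (tendsto_iff_dist_tendsto_zero.1 hF)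


/-- If `S ⊆ F n` frequently and `F n → A`, then `S ⊆ A`. -/
lemma supset_of_frequently {F : ℕ → Hyperspace X} {A : Hyperspace X}
    (hF : Tendsto F atTop (nhds A)) {S : Set X}
    (hfreq : ∃ᶠ n in atTop, S ⊆ cs (F n)) : S ⊆ cs A := by
  intro y hy
  refine ((cs_closed A).mem_iff_infDist_zero (cs_ne A)).2 ?_
  by_contra h
  have hpos : 0 < infDist y (cs A) := lt_of_le_of_ne infDist_nonneg (Ne.symm h)
  have hev : ∀ᶠ n in atTop, dist (F n) A < infDist y (cs A) :=
    (tendsto_iff_dist_tendsto_zero.1 hF).eventually_lt_const hpos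
  obtain ⟨n, hn1, hn2⟩ := (hfreq.and_eventually hev).exists
  have : infDist y (cs A) ≤ infDist y (cs (F n)) + hausdorffDist (cs (F n)) (cs A) :=
    infDist_le_infDist_add_hausdorffDist (hedist_ne_top (F n) A)
  rw [infDist_zero_of_mem (hn1 hy), zero_add] at this
  exact absurd (lt_of_le_of_lt this hn2) (lt_irrefl _)

/-- If `F n ⊆ S` frequently (S closed) and `F n → A`, then `A ⊆ S`. -/
lemma subset_of_frequently {F : ℕ → Hyperspace X} {A : Hyperspace X}
    (hF : Tendsto F atTop (nhds A)) {S : Set X} (hS : IsClosed S)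
    (hfreq : ∃ᶠ n in atTop, cs (F n) ⊆ S) : cs A ⊆ S := by
  intro y hy
  obtain ⟨x, hx, hxy⟩ := exists_tendsto_of_mem hF hy
  have : y ∈ closure S := mem_closure_of_frequently_of_tendsto
    (hfreq.mono fun n hn => hn (hx n)) hxy
  rwa [hS.closure_eq] at this

lemma isClosed_supersets (S : Set X) : IsClosed {C : Hyperspace X | S ⊆ cs C} :=
  IsSeqClosed.isClosed fun F A hF hFA =>
    supset_of_frequently hFA (Frequently.of_forall hF)

lemma isClosed_subsets {S : Set X} (hS : IsClosed S) :
    IsClosed {C : Hyperspace X | cs C ⊆ S} :=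
  IsSeqClosed.isClosed fun F A hF hFA =>
    subset_of_frequently hFA hS (Frequently.of_forall hF)

lemma isOpen_subsets {U : Set X} (hU : IsOpen U) :
    IsOpen {C : Hyperspace X | cs C ⊆ U} := by
  rw [Metric.isOpen_iff]
  intro C hC
  obtain ⟨δ, hδ, hδU⟩ := (cs_compact C).exists_thickening_subset_open hU hC
  refine ⟨δ, hδ, fun D hD => ?_⟩
  rw [mem_ball, hdist_eq] at hD
  intro x hx
  apply hδU
  have h1 : infDist x (cs C) ≤ hausdorffDist (cs D) (cs C) :=
    infDist_le_hausdorffDist_of_mem hx (hedist_ne_top D C)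
  obtain ⟨y, hy, hxy⟩ := (infDist_lt_iff (cs_ne C)).1 (lt_of_le_of_lt h1 hD)
  exact Metric.mem_thickening_iff.2 ⟨y, hy, hxy⟩

/-- A preconnected set cannot be covered by two disjoint closed sets meeting it. -/
lemma preconn_partition {α : Type*} [TopologicalSpace α] {Y F1 F2 : Set α}
    (hY : IsPreconnected Y) (hcov : Y ⊆ F1 ∪ F2) (hF1 : IsClosed F1) (hF2 : IsClosed F2)
    (hdisj : ∀ y ∈ Y, y ∈ F1 → y ∈ F2 → False)
    (h1 : (Y ∩ F1).Nonempty) (h2 : (Y ∩ F2).Nonempty) : False := by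
  have hcov' : Y ⊆ F2ᶜ ∪ F1ᶜ := by
    intro y hy
    by_cases hy1 : y ∈ F1
    · by_cases hy2 : y ∈ F2
      · exact absurd (hdisj y hy hy1 hy2) (by simp)
      · exact Or.inl hy2
    · exact Or.inr hy1
  have hne1 : (Y ∩ F2ᶜ).Nonempty := by
    obtain ⟨y, hy, hy1⟩ := h1
    exact ⟨y, hy, fun hy2 => hdisj y hy hy1 hy2⟩
  have hne2 : (Y ∩ F1ᶜ).Nonempty := by
    obtain ⟨y, hy, hy2⟩ := h2
    exact ⟨y, hy, fun hy1 => hdisj y hy hy1 hy2⟩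
  obtain ⟨y, hy, hy2, hy1⟩ := hY F2ᶜ F1ᶜ hF2.isOpen_compl hF1.isOpen_compl hcov' hne1 hne2
  rcases hcov hy with h | h
  · exact hy1 h
  · exact hy2 h

/-- The collection of connected nonempty compacts is closed in the hyperspace of
nonempty compacts. -/
lemma isClosed_conn_set :
    IsClosed {K : NonemptyCompacts X | IsConnected (K : Set X)} := by
  refine IsSeqClosed.isClosed ?_
  intro F A hF hFA
  refine ⟨A.nonempty, ?_⟩
  intro U V hU hV hUV hUne hVne
  by_contra hcon
  rw [Set.not_nonempty_iff_eq_empty] at hcon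
  set K1 : Set X := (A : Set X) \ V with hK1def
  set K2 : Set X := (A : Set X) \ U with hK2def
  have hK1c : IsCompact K1 := A.isCompact.diff hV
  have hK2c : IsCompact K2 := A.isCompact.diff hU
  have hdisj : Disjoint K1 K2 := by
    rw [Set.disjoint_iff_inter_eq_empty]
    ext y
    simp only [Set.mem_inter_iff, Set.mem_empty_iff_false, iff_false, not_and]
    intro hy1 hy2
    rcases hUV hy1.1 with h | h
    · exact hy2.2 h
    · exact hy1.2 h
  obtain ⟨δ, hδpos, hTdisj⟩ := hdisj.exists_thickenings hK1c hK2c.isClosed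
  set T1 := Metric.thickening δ K1
  set T2 := Metric.thickening δ K2
  have hT1 : IsOpen T1 := Metric.isOpen_thickening
  have hT2 : IsOpen T2 := Metric.isOpen_thickening
  have hAsub : (A : Set X) ⊆ T1 ∪ T2 := by
    intro y hy
    rcases hUV hy with h | h
    · have hyV : y ∉ V := by
        intro hyV
        have : y ∈ (A : Set X) ∩ (U ∩ V) := ⟨hy, h, hyV⟩
        rw [hcon] at this; exact this
      exact Or.inl (Metric.self_subset_thickening hδpos _ ⟨hy, hyV⟩)
    · by_cases hyU : y ∈ U
      · have : y ∈ (A : Set X) ∩ (U ∩ V) := ⟨hy, hyU, h⟩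
        rw [hcon] at this; exact this.elim
      · exact Or.inr (Metric.self_subset_thickening hδpos _ ⟨hy, hyU⟩)
  obtain ⟨ρ, hρpos, hρsub⟩ :=
    A.isCompact.exists_thickening_subset_open (hT1.union hT2) hAsub
  -- eventually F n ⊆ T1 ∪ T2
  have hev1 : ∀ᶠ n in atTop, (F n : Set X) ⊆ T1 ∪ T2 := by
    have hd : Tendsto (fun n => dist (F n) A) atTop (nhds 0) :=
      tendsto_iff_dist_tendsto_zero.1 hFA
    filter_upwards [hd.eventually_lt_const hρpos] with n hn
    intro x hx
    apply hρsub
    have h1 : infDist x (A : Set X) ≤ hausdorffDist ((F n) : Set X) (A : Set X) :=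
      infDist_le_hausdorffDist_of_mem hx
        (hausdorffEdist_ne_top_of_nonempty_of_bounded (F n).nonempty A.nonempty
          (F n).isCompact.isBounded A.isCompact.isBounded)
    obtain ⟨y, hy, hxy⟩ := (infDist_lt_iff A.nonempty).1 (lt_of_le_of_lt h1 hn)
    exact Metric.mem_thickening_iff.2 ⟨y, hy, hxy⟩
  -- points approximating K1 and K2 points
  have hK1ne : K1.Nonempty := by
    obtain ⟨y, hyA, hyU⟩ := hUne
    refine ⟨y, hyA, fun hyV => ?_⟩
    have : y ∈ (A : Set X) ∩ (U ∩ V) := ⟨hyA, hyU, hyV⟩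
    rw [hcon] at this; exact this
  have hK2ne : K2.Nonempty := by
    obtain ⟨y, hyA, hyV⟩ := hVne
    refine ⟨y, hyA, fun hyU => ?_⟩
    have : y ∈ (A : Set X) ∩ (U ∩ V) := ⟨hyA, hyU, hyV⟩
    rw [hcon] at this; exact this
  obtain ⟨a1, ha1⟩ := hK1ne
  obtain ⟨a2, ha2⟩ := hK2ne
  -- approximation sequences (convert to Hyperspace-free argument)
  have happrox : ∀ (a : X), a ∈ (A : Set X) →
      ∀ᶠ n in atTop, ((F n : Set X) ∩ Metric.ball a δ).Nonempty := by
    intro a ha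
    have hch : ∀ n : ℕ, ∃ z ∈ (F n : Set X), infDist a ((F n) : Set X) = dist a z := fun n =>
      (F n).isCompact.exists_infDist_eq_dist (F n).nonempty a
    choose z hz hzd using hch
    have hzten : Tendsto (fun n => dist a (z n)) atTop (nhds 0) := by
      have hb : ∀ n, dist a (z n) ≤ dist A (F n) := by
        intro n
        rw [← hzd n]
        calc infDist a ((F n) : Set X)
            ≤ infDist a (A : Set X) + hausdorffDist (A : Set X) ((F n) : Set X) :=
              infDist_le_infDist_add_hausdorffDist
                (hausdorffEdist_ne_top_of_nonempty_of_bounded A.nonempty (F n).nonempty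
                  A.isCompact.isBounded (F n).isCompact.isBounded)
          _ = dist A (F n) := by rw [infDist_zero_of_mem ha, zero_add]; rfl
      have hd : Tendsto (fun n => dist A (F n)) atTop (nhds 0) := by
        have := tendsto_iff_dist_tendsto_zero.1 hFA
        simpa [dist_comm] using this
      exact squeeze_zero (fun n => dist_nonneg) hb hd
    filter_upwards [hzten.eventually_lt_const hδpos] with n hn
    exact ⟨z n, hz n, by rwa [Metric.mem_ball, dist_comm]⟩
  have hball1 : Metric.ball a1 δ ⊆ T1 := fun y hy =>
    Metric.mem_thickening_iff.2 ⟨a1, ha1, by rwa [Metric.mem_ball] at hy⟩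
  have hball2 : Metric.ball a2 δ ⊆ T2 := fun y hy =>
    Metric.mem_thickening_iff.2 ⟨a2, ha2, by rwa [Metric.mem_ball] at hy⟩
  obtain ⟨n, hn1, hn2, hn3⟩ :=
    (hev1.and ((happrox a1 ha1.1).and (happrox a2 ha2.1))).exists
  obtain ⟨p1, hp1F, hp1⟩ := hn2
  obtain ⟨p2, hp2F, hp2⟩ := hn3
  have hFn := hF n
  obtain ⟨y, hy⟩ := hFn.2 T1 T2 hT1 hT2 hn1 ⟨p1, hp1F, hball1 hp1⟩ ⟨p2, hp2F, hball2 hp2⟩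
  exact (hTdisj.ne_of_mem hy.2.1 hy.2.2) rfl

instance : CompactSpace (Hyperspace X) :=
  isCompact_iff_compactSpace.mp isClosed_conn_set.isCompact

/-- Union of a family of subcontinua. -/
def hUnion (𝒜 : Set (Hyperspace X)) : Set X := ⋃ A ∈ 𝒜, cs A

lemma subset_hUnion {𝒜 : Set (Hyperspace X)} {A : Hyperspace X} (hA : A ∈ 𝒜) :
    cs A ⊆ hUnion 𝒜 := fun x hx => Set.mem_biUnion hA hx

lemma hUnion_isCompact {𝒜 : Set (Hyperspace X)} (h𝒜 : IsCompact 𝒜) :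
    IsCompact (hUnion 𝒜) := by
  have hcl : IsClosed (hUnion 𝒜) := by
    refine IsSeqClosed.isClosed ?_
    intro x y hx hxy
    have hch : ∀ n, ∃ A ∈ 𝒜, x n ∈ cs A := by
      intro n
      obtain ⟨S, hS, hmem⟩ := hx n
      simp only [Set.mem_range] at hS
      obtain ⟨A, rfl⟩ := hS
      simp only [Set.mem_iUnion] at hmem
      obtain ⟨hA, hmem⟩ := hmem
      exact ⟨A, hA, hmem⟩
    choose A hA hxa using hch
    obtain ⟨B, hB, φ, hφ, hconv⟩ := h𝒜.tendsto_subseq hA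
    have hyB : y ∈ cs B :=
      mem_limit hconv (fun n => hxa (φ n)) (hxy.comp hφ.tendsto_atTop)
    exact subset_hUnion hB hyB
  exact hcl.isCompact

lemma hUnion_isConnected {𝒜 : Set (Hyperspace X)} (h𝒜 : IsCompact 𝒜)
    (hconn : IsConnected 𝒜) : IsConnected (hUnion 𝒜) := by
  obtain ⟨A0, hA0⟩ := hconn.nonempty
  refine ⟨(cs_ne A0).mono (subset_hUnion hA0), ?_⟩
  intro U V hU hV hcov hUne hVne
  by_contra hcon
  rw [Set.not_nonempty_iff_eq_empty] at hcon
  have hsplit : ∀ A ∈ 𝒜, cs A ⊆ U ∨ cs A ⊆ V := by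
    intro A hA
    have hsubUV : cs A ⊆ U ∪ V := (subset_hUnion hA).trans hcov
    by_cases h1 : (cs A ∩ U).Nonempty
    · by_cases h2 : (cs A ∩ V).Nonempty
      · obtain ⟨y, hy⟩ := (cs_conn A).2 U V hU hV hsubUV h1 h2
        have : y ∈ hUnion 𝒜 ∩ (U ∩ V) := ⟨subset_hUnion hA hy.1, hy.2⟩
        rw [hcon] at this; exact this.elim
      · rw [Set.not_nonempty_iff_eq_empty] at h2
        left
        intro y hy
        rcases hsubUV hy with h | h
        · exact h
        · exfalso
          have hyv : y ∈ cs A ∩ V := ⟨hy, h⟩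
          rw [h2] at hyv; exact hyv
    · rw [Set.not_nonempty_iff_eq_empty] at h1
      right
      intro y hy
      rcases hsubUV hy with h | h
      · exfalso
        have hyu : y ∈ cs A ∩ U := ⟨hy, h⟩
        rw [h1] at hyu; exact hyu
      · exact h
  have hAU : (𝒜 ∩ {C | cs C ⊆ U}).Nonempty := by
    obtain ⟨y, hyH, hyU⟩ := hUne
    obtain ⟨S, hS, hmem⟩ := hyH
    simp only [Set.mem_range] at hS
    obtain ⟨A, rfl⟩ := hS
    simp only [Set.mem_iUnion] at hmem
    obtain ⟨hA, hmem⟩ := hmem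
    rcases hsplit A hA with h | h
    · exact ⟨A, hA, h⟩
    · exfalso
      have : y ∈ hUnion 𝒜 ∩ (U ∩ V) := ⟨subset_hUnion hA hmem, hyU, h hmem⟩
      rw [hcon] at this; exact this
  have hAV : (𝒜 ∩ {C | cs C ⊆ V}).Nonempty := by
    obtain ⟨y, hyH, hyV⟩ := hVne
    obtain ⟨S, hS, hmem⟩ := hyH
    simp only [Set.mem_range] at hS
    obtain ⟨A, rfl⟩ := hS
    simp only [Set.mem_iUnion] at hmem
    obtain ⟨hA, hmem⟩ := hmem
    rcases hsplit A hA with h | h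
    · exfalso
      have : y ∈ hUnion 𝒜 ∩ (U ∩ V) := ⟨subset_hUnion hA hmem, h hmem, hyV⟩
      rw [hcon] at this; exact this
    · exact ⟨A, hA, h⟩
  obtain ⟨C, hC𝒜, hCU, hCV⟩ := hconn.2 {C | cs C ⊆ U} {C | cs C ⊆ V}
    (isOpen_subsets hU) (isOpen_subsets hV)
    (fun A hA => hsplit A hA) hAU hAV
  obtain ⟨y, hy⟩ := cs_ne C
  have : y ∈ hUnion 𝒜 ∩ (U ∩ V) := ⟨subset_hUnion hC𝒜 hy, hCU hy, hCV hy⟩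
  rw [hcon] at this; exact this

/-- binary union in the hyperspace-carrier. -/
def joinNC (A B : NonemptyCompacts X) : NonemptyCompacts X :=
  ⟨⟨(A : Set X) ∪ (B : Set X), A.isCompact.union B.isCompact⟩,
    A.nonempty.mono Set.subset_union_left⟩

@[simp] lemma coe_joinNC (A B : NonemptyCompacts X) :
    (joinNC A B : Set X) = (A : Set X) ∪ (B : Set X) := rfl

lemma exists_close_mem {A B : NonemptyCompacts X} {x : X} (hx : x ∈ (A : Set X)) :
    ∃ y ∈ (B : Set X), dist x y ≤ dist A B := by
  obtain ⟨y, hy, hd⟩ := B.isCompact.exists_infDist_eq_dist B.nonempty x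
  refine ⟨y, hy, ?_⟩
  rw [← hd]
  exact infDist_le_hausdorffDist_of_mem hx
    (hausdorffEdist_ne_top_of_nonempty_of_bounded A.nonempty B.nonempty
      A.isCompact.isBounded B.isCompact.isBounded)

lemma dist_joinNC_le (A B C D : NonemptyCompacts X) :
    dist (joinNC A B) (joinNC C D) ≤ dist A C + dist B D := by
  have h0 : (0:ℝ) ≤ dist A C + dist B D := by positivity
  have key : hausdorffDist ((joinNC A B : Set X)) ((joinNC C D : Set X)) ≤
      dist A C + dist B D := by
    apply hausdorffDist_le_of_mem_dist h0
    · intro x hx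
      rcases hx with hx | hx
      · obtain ⟨y, hy, hxy⟩ := exists_close_mem (B := C) hx
        exact ⟨y, Or.inl hy, hxy.trans (by simp [dist_nonneg, le_add_of_nonneg_right])⟩
      · obtain ⟨y, hy, hxy⟩ := exists_close_mem (B := D) hx
        exact ⟨y, Or.inr hy, hxy.trans (by simp [dist_nonneg, le_add_of_nonneg_left])⟩
    · intro x hx
      rcases hx with hx | hx
      · obtain ⟨y, hy, hxy⟩ := exists_close_mem (B := A) hx
        refine ⟨y, Or.inl hy, hxy.trans ?_⟩
        rw [dist_comm]
        simp [dist_nonneg, le_add_of_nonneg_right]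
      · obtain ⟨y, hy, hxy⟩ := exists_close_mem (B := B) hx
        refine ⟨y, Or.inr hy, hxy.trans ?_⟩
        rw [dist_comm]
        simp [dist_nonneg, le_add_of_nonneg_left]
  exact key

lemma continuous_joinNC :
    Continuous fun p : NonemptyCompacts X × NonemptyCompacts X => joinNC p.1 p.2 := by
  rw [Metric.continuous_iff]
  intro p ε hε
  refine ⟨ε / 2, by positivity, fun q hq => ?_⟩
  have h1 : dist q.1 p.1 ≤ dist q p := by
    rw [Prod.dist_eq]; exact le_max_left _ _
  have h2 : dist q.2 p.2 ≤ dist q p := by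
    rw [Prod.dist_eq]; exact le_max_right _ _
  calc dist (joinNC q.1 q.2) (joinNC p.1 p.2) ≤ dist q.1 p.1 + dist q.2 p.2 :=
        dist_joinNC_le _ _ _ _
    _ ≤ dist q p + dist q p := add_le_add h1 h2
    _ < ε / 2 + ε / 2 := by exact add_lt_add hq hq
    _ = ε := by ring

lemma isCompact_ccIn {K : Set X} (hK : IsCompact K) {x : X} (hx : x ∈ K) :
    IsCompact (connectedComponentIn K x) := by
  rw [connectedComponentIn_eq_image hx]
  have : CompactSpace K := isCompact_iff_compactSpace.mp hK
  exact (isClosed_connectedComponent.isCompact).image continuous_subtype_val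



/-! ### Boundary bumping -/

lemma boundary_bump {Y K : Set X} (hYconn : IsConnected Y)
    (hK : IsClosed K) (hKY : K ⊆ Y) (hKne : K ≠ Y) {x : X} (hx : x ∈ K) :
    (connectedComponentIn K x ∩ closure (Y \ K)).Nonempty := by
  by_contra hcon
  rw [Set.not_nonempty_iff_eq_empty] at hcon
  haveI hWc : CompactSpace K := isCompact_iff_compactSpace.mp hK.isCompact
  set x' : K := ⟨x, hx⟩
  set cc : Set K := connectedComponent x'
  have hccIm : connectedComponentIn K x = Subtype.val '' cc :=
    connectedComponentIn_eq_image hx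
  set F' : Set K := Subtype.val ⁻¹' (closure (Y \ K)) with hF'def
  have hF'closed : IsClosed F' := (isClosed_closure).preimage continuous_subtype_val
  have hccF' : cc ∩ F' = ∅ := by
    rw [Set.eq_empty_iff_forall_notMem]
    rintro w ⟨hw1, hw2⟩
    have : (w : X) ∈ connectedComponentIn K x ∩ closure (Y \ K) := by
      rw [hccIm]
      exact ⟨Set.mem_image_of_mem _ hw1, hw2⟩
    rw [hcon] at this; exact this
  have hiInter := connectedComponent_eq_iInter_isClopen x'
  -- F' is covered by complements of clopen sets containing x'
  have hcov : F' ⊆ ⋃ s : {s : Set K // IsClopen s ∧ x' ∈ s}, (↑s : Set K)ᶜ := by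
    intro w hw
    rw [Set.mem_iUnion]
    by_contra hnot
    push_neg at hnot
    have hwcc : w ∈ cc := by
      show w ∈ connectedComponent x'
      rw [hiInter, Set.mem_iInter]
      intro s
      have := hnot s
      simpa using this
    have : w ∈ cc ∩ F' := ⟨hwcc, hw⟩
    rw [hccF'] at this; exact this
  obtain ⟨tt, htt⟩ := hF'closed.isCompact.elim_finite_subcover
    (fun s : {s : Set K // IsClopen s ∧ x' ∈ s} => (↑s : Set K)ᶜ)
    (fun s => s.2.1.1.isOpen_compl) hcov
  set E : Set K := ⋂ s ∈ tt, (↑s : Set K)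
  have hEclopen : IsClopen E := by
    constructor
    · exact isClosed_biInter fun s _ => s.2.1.1
    · exact isOpen_biInter_finset fun s _ => s.2.1.2
  have hxE : x' ∈ E := Set.mem_biInter fun s _ => s.2.2
  have hEF' : E ∩ F' = ∅ := by
    rw [Set.eq_empty_iff_forall_notMem]
    rintro w ⟨hw1, hw2⟩
    obtain ⟨s, hs⟩ := Set.mem_iUnion.1 (htt hw2)
    simp only [Set.mem_iUnion] at hs
    obtain ⟨hstt, hws⟩ := hs
    exact hws (Set.biInter_subset_of_mem hstt hw1)
  set E' : Set X := Subtype.val '' E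
  have hE'K : E' ⊆ K := by
    rintro y ⟨w, _, rfl⟩; exact w.2
  have hE'compact : IsCompact E' :=
    (hEclopen.1.isCompact).image continuous_subtype_val
  have hcomplK : K \ E' = Subtype.val '' (Eᶜ) := by
    ext y
    constructor
    · rintro ⟨hyK, hyE'⟩
      refine ⟨⟨y, hyK⟩, fun hE => hyE' ⟨⟨y, hyK⟩, hE, rfl⟩, rfl⟩
    · rintro ⟨w, hw, rfl⟩
      refine ⟨w.2, fun hmem => ?_⟩
      obtain ⟨w', hw', hww'⟩ := hmem
      have : w' = w := Subtype.ext hww'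
      rw [this] at hw'
      exact hw hw'
  have hcomplclosed : IsClosed (K \ E') := by
    rw [hcomplK]
    exact ((hEclopen.2.isClosed_compl.isCompact).image continuous_subtype_val).isClosed
  set F2 : Set X := closure (Y \ K) ∪ (K \ E')
  have hF2closed : IsClosed F2 := isClosed_closure.union hcomplclosed
  have hcovY : Y ⊆ E' ∪ F2 := by
    intro y hy
    by_cases hyK : y ∈ K
    · by_cases hyE : (⟨y, hyK⟩ : K) ∈ E
      · exact Or.inl ⟨⟨y, hyK⟩, hyE, rfl⟩
      · refine Or.inr (Or.inr ⟨hyK, ?_⟩)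
        rintro ⟨w, hw, hwy⟩
        have : w = ⟨y, hyK⟩ := Subtype.ext hwy
        rw [this] at hw
        exact hyE hw
    · exact Or.inr (Or.inl (subset_closure ⟨hy, hyK⟩))
  have hdisj : ∀ y ∈ Y, y ∈ E' → y ∈ F2 → False := by
    rintro y _ ⟨w, hwE, rfl⟩ hy2
    rcases hy2 with hy2 | hy2
    · have : w ∈ E ∩ F' := ⟨hwE, hy2⟩
      rw [hEF'] at this; exact this
    · exact hy2.2 ⟨w, hwE, rfl⟩
  have hne1 : (Y ∩ E').Nonempty := ⟨x, hKY hx, ⟨x', hxE, rfl⟩⟩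
  have hne2 : (Y ∩ F2).Nonempty := by
    obtain ⟨y, hyY, hyK⟩ := Set.exists_of_ssubset (ssubset_of_subset_of_ne hKY hKne)
    exact ⟨y, hyY, Or.inl (subset_closure ⟨hyY, hyK⟩)⟩
  exact preconn_partition hYconn.2 hcovY hE'compact.isClosed hF2closed hdisj hne1 hne2

/-! ### Whitney map machinery -/

section Whitney

variable {μ : Hyperspace X → ℝ} (hμcont : Continuous μ)
  (hμ0 : ∀ A : Hyperspace X, (A.1 : Set X).Subsingleton → μ A = 0)
  (hμmono : ∀ A B : Hyperspace X, (A.1 : Set X) ⊂ (B.1 : Set X) → μ A < μ B)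

include hμcont hμ0 hμmono

lemma mono' {A B : Hyperspace X} (h : cs A ⊆ cs B) : μ A ≤ μ B := by
  by_cases he : cs A = cs B
  · rw [hext he]
  · exact (hμmono A B (ssubset_of_subset_of_ne h he)).le

lemma eq_of_subset_of_μeq {A B : Hyperspace X} (h : cs A ⊆ cs B) (hμ : μ A = μ B) :
    A = B := by
  by_contra hne
  have hne' : cs A ≠ cs B := fun he => hne (hext he)
  exact absurd hμ (hμmono A B (ssubset_of_subset_of_ne h hne')).ne

lemma μ_pointH (x : X) : μ (pointH (X := X) x) = 0 :=
  hμ0 _ (by simp [pointH, mkH])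

lemma μ_nonneg (A : Hyperspace X) : 0 ≤ μ A := by
  obtain ⟨a, ha⟩ := cs_ne A
  have h : cs (pointH (X := X) a) ⊆ cs A := by simp [ha]
  have := mono' hμcont hμ0 hμmono h
  rwa [μ_pointH hμcont hμ0 hμmono] at this

lemma nontrivial_of_μpos {A : Hyperspace X} (h : 0 < μ A) : (cs A).Nontrivial := by
  by_contra hs
  rw [Set.not_nontrivial_iff] at hs
  rw [hμ0 A hs] at h
  exact lt_irrefl _ h

lemma μpos_of_nontrivial {A : Hyperspace X} (h : (cs A).Nontrivial) : 0 < μ A := by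
  obtain ⟨a, ha, b, hb, hab⟩ := h
  have hss : cs (pointH (X := X) a) ⊂ cs A := by
    rw [Set.ssubset_iff_subset_ne]
    constructor
    · simp [ha]
    · intro he
      rw [← he] at hb
      exact hab (hb.symm)
  have := hμmono _ _ hss
  rwa [μ_pointH hμcont hμ0 hμmono] at this

/-- The fundamental growth lemma: a subcontinuum of `Y` containing `A` with any
prescribed Whitney value between `μ A` and `μ Y`. -/
lemma exists_growth (A Y : Hyperspace X) (hAY : cs A ⊆ cs Y) {s : ℝ}
    (h1 : μ A ≤ s) (h2 : s ≤ μ Y) :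
    ∃ C : Hyperspace X, cs A ⊆ cs C ∧ cs C ⊆ cs Y ∧ μ C = s := by
  set 𝒮 : Set (Hyperspace X) := {C | cs A ⊆ cs C ∧ (cs C ⊆ cs Y ∧ μ C ≤ s)} with h𝒮def
  have h𝒮closed : IsClosed 𝒮 := by
    have he : 𝒮 = {C | cs A ⊆ cs C} ∩ ({C | cs C ⊆ cs Y} ∩ {C | μ C ≤ s}) := rfl
    rw [he]
    exact (isClosed_supersets _).inter ((isClosed_subsets (cs_closed Y)).inter
      (isClosed_le hμcont continuous_const))
  have h𝒮ne : 𝒮.Nonempty := ⟨A, subset_rfl, hAY, h1⟩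
  obtain ⟨Cm, hCm, hmax⟩ := h𝒮closed.isCompact.exists_isMaxOn h𝒮ne hμcont.continuousOn
  suffices heq : μ Cm = s by exact ⟨Cm, hCm.1, hCm.2.1, heq⟩
  by_contra hneq
  have hlt : μ Cm < s := lt_of_le_of_ne hCm.2.2 hneq
  obtain ⟨δ, hδpos, hδ⟩ := Metric.continuous_iff.1 hμcont Cm (s - μ Cm) (by linarith)
  set ε := δ / 2 with hεdef
  have hεpos : 0 < ε := by positivity
  set K : Set X := cs Y ∩ {y | infDist y (cs Cm) ≤ ε} with hKdef
  have hKclosed : IsClosed K :=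
    (cs_closed Y).inter (isClosed_le (continuous_infDist_pt _) continuous_const)
  have hCmK : cs Cm ⊆ K := fun y hy =>
    ⟨hCm.2.1 hy, by simp only [Set.mem_setOf_eq, infDist_zero_of_mem hy]; exact hεpos.le⟩
  have hKY : K ⊆ cs Y := Set.inter_subset_left
  by_cases hKeq : K = cs Y
  · -- Y is within ε of Cm, so μ Y < s, contradiction
    have hd : dist Y Cm ≤ ε := by
      rw [hdist_eq]
      apply hausdorffDist_le_of_mem_dist hεpos.le
      · intro y hy
        have hyK : y ∈ K := by rw [hKeq]; exact hy
        obtain ⟨z, hz, hdz⟩ :=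
          (cs_compact Cm).exists_infDist_eq_dist (cs_ne Cm) y
        exact ⟨z, hz, by rw [← hdz]; exact hyK.2⟩
      · intro y hy
        exact ⟨y, hCm.2.1 hy, by simpa using hεpos.le⟩
    have := hδ Y (lt_of_le_of_lt hd (by rw [hεdef]; linarith))
    rw [Real.dist_eq, abs_lt] at this
    have : μ Y < s := by linarith [this.2]
    linarith
  · obtain ⟨x0, hx0⟩ := cs_ne Cm
    have hx0K : x0 ∈ K := hCmK hx0
    set C' := connectedComponentIn K x0 with hC'def
    have hCmC' : cs Cm ⊆ C' :=
      (cs_conn Cm).isPreconnected.subset_connectedComponentIn hx0 hCmK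
    have hC'K : C' ⊆ K := connectedComponentIn_subset _ _
    have hC'comp : IsCompact C' := isCompact_ccIn hKclosed.isCompact hx0K
    have hC'conn : IsConnected C' := isConnected_connectedComponentIn_iff.2 hx0K
    obtain ⟨y, hyC', hycl⟩ := boundary_bump (cs_conn Y) hKclosed hKY hKeq hx0K
    have hyε : ε ≤ infDist y (cs Cm) := by
      have hsub : cs Y \ K ⊆ {z | ε ≤ infDist z (cs Cm)} := by
        rintro z ⟨hz1, hz2⟩
        have : ¬ infDist z (cs Cm) ≤ ε := fun hle => hz2 ⟨hz1, hle⟩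
        exact (not_le.1 this).le
      have hclosed : IsClosed {z | ε ≤ infDist z (cs Cm)} :=
        isClosed_le continuous_const (continuous_infDist_pt _)
      exact closure_minimal hsub hclosed hycl
    have hynotin : y ∉ cs Cm := by
      intro hmem
      rw [infDist_zero_of_mem hmem] at hyε
      linarith
    set D := mkH C' hC'comp hC'conn with hDdef
    have hssub : cs Cm ⊂ cs D := by
      rw [Set.ssubset_iff_subset_ne]
      refine ⟨hCmC', fun he => hynotin ?_⟩
      rw [he]; exact hyC'
    have hμD : μ Cm < μ D := hμmono _ _ hssub
    have hdistD : dist D Cm ≤ ε := by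
      rw [hdist_eq]
      apply hausdorffDist_le_of_mem_dist hεpos.le
      · intro z hz
        obtain ⟨w, hw, hdw⟩ := (cs_compact Cm).exists_infDist_eq_dist (cs_ne Cm) z
        exact ⟨w, hw, by rw [← hdw]; exact (hC'K hz).2⟩
      · intro z hz
        exact ⟨z, hCmC' hz, by simpa using hεpos.le⟩
    have hμDs : μ D < s := by
      have := hδ D (lt_of_le_of_lt hdistD (by rw [hεdef]; linarith))
      rw [Real.dist_eq, abs_lt] at this
      linarith [this.2]
    have hD𝒮 : D ∈ 𝒮 := ⟨hCm.1.trans hCmC', hC'K.trans hKY, hμDs.le⟩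
    exact absurd (hmax hD𝒮) (not_le.2 hμD)

/-- Growth from a point. -/
lemma exists_growth_point (Y : Hyperspace X) {x : X} (hx : x ∈ cs Y) {s : ℝ}
    (h1 : 0 ≤ s) (h2 : s ≤ μ Y) :
    ∃ C : Hyperspace X, x ∈ cs C ∧ cs C ⊆ cs Y ∧ μ C = s := by
  have hsub : cs (pointH (X := X) x) ⊆ cs Y := by simp [hx]
  have h0 : μ (pointH (X := X) x) ≤ s := by rw [μ_pointH hμcont hμ0 hμmono]; exact h1
  obtain ⟨C, hC1, hC2, hC3⟩ := exists_growth hμcont hμ0 hμmono (pointH x) Y hsub h0 h2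
  exact ⟨C, hC1 (by simp), hC2, hC3⟩

/-! ### Maximal chains and order arcs -/

omit hμcont hμ0 hμmono in
lemma exists_maxchain (T : Hyperspace X) {x : X} (hxT : x ∈ cs T) :
    ∃ 𝔠 : Set (Hyperspace X),
      (∀ C ∈ 𝔠, x ∈ cs C ∧ cs C ⊆ cs T) ∧
      pointH x ∈ 𝔠 ∧ T ∈ 𝔠 ∧
      (∀ C ∈ 𝔠, ∀ D ∈ 𝔠, cs C ⊆ cs D ∨ cs D ⊆ cs C) ∧
      (∀ D : Hyperspace X, x ∈ cs D → cs D ⊆ cs T →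
        (∀ C ∈ 𝔠, cs C ⊆ cs D ∨ cs D ⊆ cs C) → D ∈ 𝔠) := by
  set Q := {C : Hyperspace X // x ∈ cs C ∧ cs C ⊆ cs T} with hQdef
  set r : Q → Q → Prop := fun C D => cs C.1 ⊆ cs D.1 with hrdef
  have hp : x ∈ cs (pointH (X := X) x) ∧ cs (pointH (X := X) x) ⊆ cs T := by
    constructor
    · simp
    · simpa using hxT
  have hT : x ∈ cs T ∧ cs T ⊆ cs T := ⟨hxT, subset_rfl⟩
  set c₀ : Set Q := {⟨pointH x, hp⟩, ⟨T, hT⟩} with hc₀def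
  have hc₀ : IsChain r c₀ := by
    intro a ha b hb hne
    rcases ha with rfl | ha
    · rcases hb with rfl | hb
      · exact (hne rfl).elim
      · rw [Set.mem_singleton_iff] at hb
        subst hb
        left
        show cs (pointH (X := X) x) ⊆ cs T
        simpa using hxT
    · rw [Set.mem_singleton_iff] at ha
      subst ha
      rcases hb with rfl | hb
      · right
        show cs (pointH (X := X) x) ⊆ cs T
        simpa using hxT
      · rw [Set.mem_singleton_iff] at hb
        subst hb
        exact (hne rfl).elim
  obtain ⟨M, hMmax, hMc₀⟩ := hc₀.exists_maxChain
  refine ⟨Subtype.val '' M, ?_, ?_, ?_, ?_, ?_⟩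
  · rintro C ⟨c, _, rfl⟩; exact c.2
  · exact ⟨⟨pointH x, hp⟩, hMc₀ (Set.mem_insert _ _), rfl⟩
  · exact ⟨⟨T, hT⟩, hMc₀ (Set.mem_insert_of_mem _ rfl), rfl⟩
  · rintro C ⟨c, hc, rfl⟩ D ⟨d, hd, rfl⟩
    by_cases hcd : c = d
    · subst hcd; left; exact subset_rfl
    · exact hMmax.1 hc hd hcd
  · intro D hxD hDT hcomp
    set d : Q := ⟨D, hxD, hDT⟩ with hddef
    have hchain : IsChain r (insert d M) := by
      apply hMmax.1.insert
      intro b hb _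
      rcases hcomp b.1 ⟨b, hb, rfl⟩ with h | h
      · right; exact h
      · left; exact h
    have heq : M = insert d M := hMmax.2 hchain (Set.subset_insert _ _)
    have : d ∈ M := by rw [heq]; exact Set.mem_insert _ _
    exact ⟨d, this, rfl⟩

/-- Order arcs: a continuous monotone family of continua from `{x}` to `T`,
parametrized by the Whitney value. -/
lemma exists_arc (T : Hyperspace X) {x : X} (hxT : x ∈ cs T) :
    ∃ φ : ℝ → Hyperspace X,
      (∀ s, x ∈ cs (φ s)) ∧ (∀ s, cs (φ s) ⊆ cs T) ∧
      (∀ s u, s ≤ u → cs (φ s) ⊆ cs (φ u)) ∧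
      (∀ s, 0 ≤ s → s ≤ μ T → μ (φ s) = s) ∧
      (φ 0 = pointH x) ∧ (∀ s, μ T ≤ s → φ s = T) ∧ Continuous φ := by
  obtain ⟨𝔠, hP0, hpt, hTop, hchain, hmaxi⟩ := exists_maxchain T hxT
  -- the chain is closed
  have hclosed : IsClosed 𝔠 := by
    refine IsSeqClosed.isClosed ?_
    intro F C hF hFC
    apply hmaxi
    · exact mem_limit_const hFC fun n => (hP0 _ (hF n)).1
    · exact subset_of_frequently hFC (cs_closed T)
        (Frequently.of_forall fun n => (hP0 _ (hF n)).2)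
    · intro D hD
      by_cases hfreq : ∃ᶠ n in atTop, cs (F n) ⊆ cs D
      · right
        exact subset_of_frequently hFC (cs_closed D) hfreq
      · left
        rw [Filter.not_frequently] at hfreq
        have hev : ∀ᶠ n in atTop, cs D ⊆ cs (F n) := by
          filter_upwards [hfreq] with n hn
          rcases hchain (F n) (hF n) D hD with h | h
          · exact absurd h hn
          · exact h
        exact supset_of_frequently hFC hev.frequently
  -- all values are attained
  have hvals : ∀ s, 0 ≤ s → s ≤ μ T → ∃ C ∈ 𝔠, μ C = s := by
    intro s h0 h1
    by_contra hnot
    push_neg at hnot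
    have hμpt : μ (pointH (X := X) x) = 0 := μ_pointH hμcont hμ0 hμmono x
    have hs0 : 0 < s := by
      rcases lt_or_eq_of_le h0 with h | h
      · exact h
      · exact absurd (hμpt.trans h) (hnot _ hpt)
    have hsT : s < μ T := by
      rcases lt_or_eq_of_le h1 with h | h
      · exact h
      · exact absurd h.symm (hnot _ hTop)
    set 𝔠m : Set (Hyperspace X) := 𝔠 ∩ {C | μ C ≤ s} with h𝔠mdef
    set 𝔠p : Set (Hyperspace X) := 𝔠 ∩ {C | s ≤ μ C} with h𝔠pdef
    have h𝔠mcl : IsClosed 𝔠m := hclosed.inter (isClosed_le hμcont continuous_const)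
    have h𝔠pcl : IsClosed 𝔠p := hclosed.inter (isClosed_le continuous_const hμcont)
    have h𝔠mne : 𝔠m.Nonempty := ⟨pointH x, hpt, by rw [Set.mem_setOf_eq, hμpt]; exact h0⟩
    have h𝔠pne : 𝔠p.Nonempty := ⟨T, hTop, h1⟩
    obtain ⟨Cm, hCm, hCmmax⟩ := h𝔠mcl.isCompact.exists_isMaxOn h𝔠mne hμcont.continuousOn
    obtain ⟨Cp, hCp, hCpmin⟩ := h𝔠pcl.isCompact.exists_isMinOn h𝔠pne hμcont.continuousOn
    have hCmlt : μ Cm < s := lt_of_le_of_ne hCm.2 (hnot _ hCm.1)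
    have hCplt : s < μ Cp := lt_of_le_of_ne hCp.2 (fun h => hnot _ hCp.1 h.symm)
    have hCmtop : ∀ E ∈ 𝔠, μ E ≤ s → cs E ⊆ cs Cm := by
      intro E hE hEs
      rcases hchain E hE Cm hCm.1 with h | h
      · exact h
      · have h1' : μ Cm ≤ μ E := mono' hμcont hμ0 hμmono h
        have h2' : μ E ≤ μ Cm := hCmmax ⟨hE, hEs⟩
        have : Cm = E := eq_of_subset_of_μeq hμcont hμ0 hμmono h (le_antisymm h1' h2')
        rw [← this]
    have hCpbot : ∀ E ∈ 𝔠, s ≤ μ E → cs Cp ⊆ cs E := by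
      intro E hE hEs
      rcases hchain E hE Cp hCp.1 with h | h
      · have h1' : μ E ≤ μ Cp := mono' hμcont hμ0 hμmono h
        have h2' : μ Cp ≤ μ E := hCpmin ⟨hE, hEs⟩
        have : E = Cp := eq_of_subset_of_μeq hμcont hμ0 hμmono h (le_antisymm h1' h2')
        rw [this]
      · exact h
    have hsub : cs Cm ⊆ cs Cp := by
      rcases hchain Cm hCm.1 Cp hCp.1 with h | h
      · exact h
      · have := mono' hμcont hμ0 hμmono h
        linarith
    obtain ⟨D, hD1, hD2, hD3⟩ := exists_growth hμcont hμ0 hμmono Cm Cp hsub hCmlt.le hCplt.le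
    have hD𝔠 : D ∈ 𝔠 := by
      apply hmaxi
      · exact hD1 (hP0 _ hCm.1).1
      · exact hD2.trans (hP0 _ hCp.1).2
      · intro E hE
        by_cases hEs : μ E ≤ s
        · left; exact (hCmtop E hE hEs).trans hD1
        · right; exact hD2.trans (hCpbot E hE (not_le.1 hEs).le)
    exact hnot D hD𝔠 hD3
  -- uniqueness via μ
  have huniq : ∀ C ∈ 𝔠, ∀ D ∈ 𝔠, μ C = μ D → C = D := by
    intro C hC D hD hμeq
    rcases hchain C hC D hD with h | h
    · exact eq_of_subset_of_μeq hμcont hμ0 hμmono h hμeq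
    · exact (eq_of_subset_of_μeq hμcont hμ0 hμmono h hμeq.symm).symm
  have hμTnn : 0 ≤ μ T := μ_nonneg hμcont hμ0 hμmono T
  set clamp : ℝ → ℝ := fun s => max 0 (min s (μ T)) with hclampdef
  have hclamp0 : ∀ s, 0 ≤ clamp s := fun s => le_max_left _ _
  have hclampT : ∀ s, clamp s ≤ μ T := fun s => max_le hμTnn (min_le_right _ _)
  have hclampmono : ∀ s u, s ≤ u → clamp s ≤ clamp u := fun s u h =>
    max_le_max le_rfl (min_le_min h le_rfl)
  have hclampid : ∀ s, 0 ≤ s → s ≤ μ T → clamp s = s := by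
    intro s h0 h1
    rw [hclampdef]
    simp only [min_eq_left h1, max_eq_right h0]
  have hclampcont : Continuous clamp :=
    continuous_const.max ((continuous_id.min continuous_const))
  have hch : ∀ s : ℝ, ∃ C, C ∈ 𝔠 ∧ μ C = clamp s := by
    intro s
    obtain ⟨C, hC, hCμ⟩ := hvals (clamp s) (hclamp0 s) (hclampT s)
    exact ⟨C, hC, hCμ⟩
  choose φ hφ𝔠 hφμ using hch
  have hφmono : ∀ s u, s ≤ u → cs (φ s) ⊆ cs (φ u) := by
    intro s u h
    rcases hchain (φ s) (hφ𝔠 s) (φ u) (hφ𝔠 u) with hh | hh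
    · exact hh
    · have h1' : μ (φ u) ≤ μ (φ s) := mono' hμcont hμ0 hμmono hh
      rw [hφμ s, hφμ u] at h1'
      have : clamp s = clamp u := le_antisymm (hclampmono s u h) h1'
      have : φ s = φ u := huniq _ (hφ𝔠 s) _ (hφ𝔠 u) (by rw [hφμ, hφμ, this])
      rw [this]
  refine ⟨φ, fun s => (hP0 _ (hφ𝔠 s)).1, fun s => (hP0 _ (hφ𝔠 s)).2, hφmono, ?_, ?_, ?_, ?_⟩
  · intro s h0 h1
    rw [hφμ s, hclampid s h0 h1]
  · apply huniq _ (hφ𝔠 0) _ hpt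
    rw [hφμ 0, μ_pointH hμcont hμ0 hμmono, hclampid 0 le_rfl hμTnn]
  · intro s hs
    apply huniq _ (hφ𝔠 s) _ hTop
    rw [hφμ s]
    rw [hclampdef]
    simp only [min_eq_right hs, max_eq_right hμTnn]
  · -- continuity
    rw [continuous_iff_seqContinuous]
    intro u s0 hu
    apply tendsto_of_subseq_tendsto
    intro ns hns
    obtain ⟨L, ms, hms, hconv⟩ := CompactSpace.tendsto_subseq (fun n => φ (u (ns n)))
    have hL𝔠 : L ∈ 𝔠 :=
      hclosed.mem_of_tendsto hconv (Filter.Eventually.of_forall fun n => hφ𝔠 _)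
    have hμL : μ L = clamp s0 := by
      have h1' : Tendsto (fun n => μ (φ (u (ns (ms n))))) atTop (nhds (μ L)) :=
        (hμcont.tendsto L).comp hconv
      have h2' : Tendsto (fun n => μ (φ (u (ns (ms n))))) atTop (nhds (clamp s0)) := by
        have : Tendsto (fun n => u (ns (ms n))) atTop (nhds s0) :=
          hu.comp (hns.comp hms.tendsto_atTop)
        have := (hclampcont.tendsto s0).comp this
        simpa only [Function.comp_def, hφμ] using this
      exact tendsto_nhds_unique h1' h2'
    have : L = φ s0 := huniq _ hL𝔠 _ (hφ𝔠 s0) (by rw [hμL, hφμ])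
    exact ⟨ms, by rw [← this]; exact hconv⟩

/-- The Γ-connector: two subcontinua of the same Whitney level with a point in
common lie in a connected subset of the level consisting of continua containing
that point inside the union. -/
lemma gamma_exists {t : ℝ} (A B : Hyperspace X) (hA : μ A = t) (hB : μ B = t)
    {x : X} (hxA : x ∈ cs A) (hxB : x ∈ cs B) :
    ∃ Γ : Set (Hyperspace X), IsCompact Γ ∧ IsConnected Γ ∧ A ∈ Γ ∧ B ∈ Γ ∧
      ∀ E ∈ Γ, μ E = t ∧ x ∈ cs E ∧ cs E ⊆ cs A ∪ cs B := by
  have ht0' : 0 ≤ t := hA ▸ μ_nonneg hμcont hμ0 hμmono A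
  obtain ⟨φA, hφAx, hφAsub, hφAmono, hφAμ, hφA0, hφAtop, hφAcont⟩ := exists_arc hμcont hμ0 hμmono A hxA
  obtain ⟨φB, hφBx, hφBsub, hφBmono, hφBμ, hφB0, hφBtop, hφBcont⟩ := exists_arc hμcont hμ0 hμmono B hxB
  have hjconn : ∀ p : ℝ × ℝ, IsConnected ((joinNC (φA p.1).1 (φB p.2).1 : Set X)) := by
    intro p
    rw [coe_joinNC]
    exact (cs_conn (φA p.1)).union ⟨x, hφAx p.1, hφBx p.2⟩ (cs_conn (φB p.2))
  set j : ℝ × ℝ → Hyperspace X := fun p => ⟨joinNC (φA p.1).1 (φB p.2).1, hjconn p⟩ with hjdef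
  have hjcs : ∀ p : ℝ × ℝ, cs (j p) = cs (φA p.1) ∪ cs (φB p.2) := fun p => rfl
  have hjcont : Continuous j := by
    apply Continuous.subtype_mk
    exact continuous_joinNC.comp
      (((continuous_subtype_val.comp hφAcont).comp continuous_fst).prodMk
        ((continuous_subtype_val.comp hφBcont).comp continuous_snd))
  set F : ℝ × ℝ → ℝ := fun p => μ (j p) with hFdef
  have hFcont : Continuous F := hμcont.comp hjcont
  set Z : Set (ℝ × ℝ) := (Set.Icc 0 t ×ˢ Set.Icc 0 t) ∩ F ⁻¹' {t} with hZdef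
  have hZclosed : IsClosed Z :=
    ((isClosed_Icc.prod isClosed_Icc)).inter (isClosed_singleton.preimage hFcont)
  have hZcompact : IsCompact Z :=
    (isCompact_Icc.prod isCompact_Icc).inter_right (isClosed_singleton.preimage hFcont)
  -- j on the horizontal axis
  have hjA : ∀ s, j (s, 0) = φA s := by
    intro s
    apply hext
    rw [hjcs]
    have : cs (φB 0) = {x} := by rw [hφB0]; rfl
    rw [this]
    exact Set.union_eq_self_of_subset_right (by simpa using hφAx s)
  have hFmono : ∀ s u1 u2, u1 ≤ u2 → F (s, u1) ≤ F (s, u2) := by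
    intro s u1 u2 h
    apply mono' hμcont hμ0 hμmono
    rw [hjcs, hjcs]
    exact Set.union_subset_union subset_rfl (hφBmono u1 u2 h)
  -- slices are nonempty
  have hslice : ∀ s ∈ Set.Icc (0:ℝ) t, ∃ u ∈ Set.Icc (0:ℝ) t, F (s, u) = t := by
    intro s hs
    have hg0 : F (s, 0) ≤ t := by
      rw [hFdef]
      simp only []
      rw [hjA s]
      rw [hφAμ s hs.1 (by rw [hA]; exact hs.2)]
      exact hs.2
    have hgt : t ≤ F (s, t) := by
      have hBsub : cs B ⊆ cs (j (s, t)) := by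
        rw [hjcs]
        have : φB t = B := hφBtop t (le_of_eq hB)
        rw [← this]
        exact Set.subset_union_right
      have := mono' hμcont hμ0 hμmono hBsub
      rwa [hB] at this
    have hcont : ContinuousOn (fun u => F (s, u)) (Set.Icc 0 t) :=
      (hFcont.comp (Continuous.prodMk_right s)).continuousOn
    have hmem : t ∈ Set.Icc (F (s, 0)) (F (s, t)) := ⟨hg0, hgt⟩
    obtain ⟨u, hu, hFu⟩ := intermediate_value_Icc ht0' hcont hmem
    exact ⟨u, hu, hFu⟩
  -- Z is connected
  have hZconn : IsPreconnected Z := by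
    intro U V hU hV hcov hUne hVne
    by_contra hcon
    rw [Set.not_nonempty_iff_eq_empty] at hcon
    -- slices
    have hsliceconn : ∀ s : ℝ, IsPreconnected {p : ℝ × ℝ | p ∈ Z ∧ p.1 = s} := by
      intro s
      have hset : {p : ℝ × ℝ | p ∈ Z ∧ p.1 = s} = (fun u => ((s : ℝ), u)) '' {u | (s, u) ∈ Z} := by
        ext p
        constructor
        · rintro ⟨hp, rfl⟩
          exact ⟨p.2, hp, rfl⟩
        · rintro ⟨u, hu, rfl⟩
          exact ⟨hu, rfl⟩
      rw [hset]
      apply IsPreconnected.image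
      · rw [isPreconnected_iff_ordConnected]
        rw [Set.ordConnected_iff]
        intro u1 hu1 u2 hu2 hle
        intro u hu
        have hIcc : u ∈ Set.Icc (0:ℝ) t := ⟨hu1.1.2.1.trans hu.1, hu.2.trans hu2.1.2.2⟩
        show (s, u) ∈ Z
        refine ⟨⟨hu1.1.1, hIcc⟩, ?_⟩
        have h1' : F (s, u1) ≤ F (s, u) := hFmono s u1 u hu.1
        have h2' : F (s, u) ≤ F (s, u2) := hFmono s u u2 hu.2
        have e1 : F (s, u1) = t := hu1.2
        have e2 : F (s, u2) = t := hu2.2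
        show F (s, u) = t
        linarith
      · exact (Continuous.prodMk_right s).continuousOn
    have hsplit : ∀ s ∈ Set.Icc (0:ℝ) t,
        ({p : ℝ × ℝ | p ∈ Z ∧ p.1 = s} ⊆ U) ∨ ({p : ℝ × ℝ | p ∈ Z ∧ p.1 = s} ⊆ V) := by
      intro s _
      set Ps := {p : ℝ × ℝ | p ∈ Z ∧ p.1 = s}
      have hPsub : Ps ⊆ U ∪ V := fun p hp => hcov hp.1
      by_cases h1 : (Ps ∩ U).Nonempty
      · by_cases h2 : (Ps ∩ V).Nonempty
        · obtain ⟨p, hp⟩ := hsliceconn s U V hU hV hPsub h1 h2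
          exfalso
          have : p ∈ Z ∩ (U ∩ V) := ⟨hp.1.1, hp.2⟩
          rw [hcon] at this; exact this
        · left
          intro p hp
          rcases hPsub hp with h | h
          · exact h
          · exact absurd ⟨p, hp, h⟩ h2
      · right
        intro p hp
        rcases hPsub hp with h | h
        · exact absurd ⟨p, hp, h⟩ h1
        · exact h
    set SU := {s ∈ Set.Icc (0:ℝ) t | ∃ u, (s, u) ∈ Z ∧ (s, u) ∈ U} with hSUdef
    set SV := {s ∈ Set.Icc (0:ℝ) t | ∃ u, (s, u) ∈ Z ∧ (s, u) ∈ V} with hSVdef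
    have hScover : Set.Icc (0:ℝ) t ⊆ SU ∪ SV := by
      intro s hs
      obtain ⟨u, hu, hFu⟩ := hslice s hs
      have hZmem : (s, u) ∈ Z := ⟨⟨hs, hu⟩, hFu⟩
      rcases hcov hZmem with h | h
      · exact Or.inl ⟨hs, u, hZmem, h⟩
      · exact Or.inr ⟨hs, u, hZmem, h⟩
    have hSdisj : ∀ s ∈ Set.Icc (0:ℝ) t, s ∈ SU → s ∈ SV → False := by
      rintro s hs ⟨_, u1, hu1Z, hu1U⟩ ⟨_, u2, hu2Z, hu2V⟩
      rcases hsplit s hs with h | h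
      · have : (s, u2) ∈ U := h ⟨hu2Z, rfl⟩
        have : (s, u2) ∈ Z ∩ (U ∩ V) := ⟨hu2Z, this, hu2V⟩
        rw [hcon] at this; exact this
      · have : (s, u1) ∈ V := h ⟨hu1Z, rfl⟩
        have : (s, u1) ∈ Z ∩ (U ∩ V) := ⟨hu1Z, hu1U, this⟩
        rw [hcon] at this; exact this
    have hSUclosed : IsClosed SU := by
      refine IsSeqClosed.isClosed ?_
      intro sseq s hseq hslim
      have hsIcc : s ∈ Set.Icc (0:ℝ) t :=
        isClosed_Icc.mem_of_tendsto hslim (Filter.Eventually.of_forall fun n => (hseq n).1)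
      choose useq huZ huU using fun n => (hseq n).2
      have huIcc : ∀ n, useq n ∈ Set.Icc (0:ℝ) t := fun n => (huZ n).1.2
      obtain ⟨u, humem, ms, hms, hulim⟩ := isCompact_Icc.tendsto_subseq huIcc
      have hplim : Tendsto (fun n => (sseq (ms n), useq (ms n))) atTop (nhds (s, u)) :=
        (hslim.comp hms.tendsto_atTop).prodMk_nhds hulim
      have hZm : (s, u) ∈ Z :=
        hZclosed.mem_of_tendsto hplim (Filter.Eventually.of_forall fun n => huZ (ms n))
      rcases hcov hZm with h | h
      · exact ⟨hsIcc, u, hZm, h⟩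
      · exfalso
        have hev : ∀ᶠ n in atTop, (sseq (ms n), useq (ms n)) ∈ V :=
          hplim.eventually (hV.mem_nhds h)
        obtain ⟨n, hn⟩ := hev.exists
        have : (sseq (ms n), useq (ms n)) ∈ Z ∩ (U ∩ V) := ⟨huZ (ms n), huU (ms n), hn⟩
        rw [hcon] at this; exact this
    have hSVclosed : IsClosed SV := by
      refine IsSeqClosed.isClosed ?_
      intro sseq s hseq hslim
      have hsIcc : s ∈ Set.Icc (0:ℝ) t :=
        isClosed_Icc.mem_of_tendsto hslim (Filter.Eventually.of_forall fun n => (hseq n).1)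
      choose useq huZ huV using fun n => (hseq n).2
      have huIcc : ∀ n, useq n ∈ Set.Icc (0:ℝ) t := fun n => (huZ n).1.2
      obtain ⟨u, humem, ms, hms, hulim⟩ := isCompact_Icc.tendsto_subseq huIcc
      have hplim : Tendsto (fun n => (sseq (ms n), useq (ms n))) atTop (nhds (s, u)) :=
        (hslim.comp hms.tendsto_atTop).prodMk_nhds hulim
      have hZm : (s, u) ∈ Z :=
        hZclosed.mem_of_tendsto hplim (Filter.Eventually.of_forall fun n => huZ (ms n))
      rcases hcov hZm with h | h
      · exfalso
        have hev : ∀ᶠ n in atTop, (sseq (ms n), useq (ms n)) ∈ U :=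
          hplim.eventually (hU.mem_nhds h)
        obtain ⟨n, hn⟩ := hev.exists
        have : (sseq (ms n), useq (ms n)) ∈ Z ∩ (U ∩ V) := ⟨huZ (ms n), hn, huV (ms n)⟩
        rw [hcon] at this; exact this
      · exact ⟨hsIcc, u, hZm, h⟩
    have hSUne : (Set.Icc (0:ℝ) t ∩ SU).Nonempty := by
      obtain ⟨p, hpZ, hpU⟩ := hUne
      refine ⟨p.1, hpZ.1.1, hpZ.1.1, p.2, ?_, ?_⟩
      · rw [Prod.mk.eta]; exact hpZ
      · rw [Prod.mk.eta]; exact hpU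
    have hSVne : (Set.Icc (0:ℝ) t ∩ SV).Nonempty := by
      obtain ⟨p, hpZ, hpV⟩ := hVne
      refine ⟨p.1, hpZ.1.1, hpZ.1.1, p.2, ?_, ?_⟩
      · rw [Prod.mk.eta]; exact hpZ
      · rw [Prod.mk.eta]; exact hpV
    exact preconn_partition isPreconnected_Icc hScover hSUclosed hSVclosed
      (fun y hy => hSdisj y hy) hSUne hSVne
  set Γ := j '' Z with hΓdef
  have hAZ : ((t : ℝ), (0 : ℝ)) ∈ Z := by
    constructor
    · exact ⟨⟨ht0', le_rfl⟩, ⟨le_rfl, ht0'⟩⟩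
    · show F (t, 0) = t
      rw [hFdef]
      simp only []
      rw [hjA t]
      have : φA t = A := hφAtop t (le_of_eq hA)
      rw [this, hA]
  have hBZ : ((0 : ℝ), (t : ℝ)) ∈ Z := by
    constructor
    · exact ⟨⟨le_rfl, ht0'⟩, ⟨ht0', le_rfl⟩⟩
    · show F (0, t) = t
      have hjB : j (0, t) = B := by
        apply hext
        rw [hjcs]
        have h1' : cs (φA 0) = {x} := by rw [hφA0]; rfl
        have h2' : φB t = B := hφBtop t (le_of_eq hB)
        rw [h1', h2']
        exact Set.union_eq_self_of_subset_left (by simpa using hxB)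
      rw [hFdef]
      simp only []
      rw [hjB, hB]
  refine ⟨Γ, hZcompact.image hjcont, ?_, ?_, ?_, ?_⟩
  · refine ⟨⟨j (t, 0), Set.mem_image_of_mem _ hAZ⟩, ?_⟩
    exact hZconn.image _ hjcont.continuousOn
  · have : φA t = A := hφAtop t (le_of_eq hA)
    refine ⟨(t, 0), hAZ, ?_⟩
    rw [hjA t, this]
  · have hjB : j (0, t) = B := by
      apply hext
      rw [hjcs]
      have h1' : cs (φA 0) = {x} := by rw [hφA0]; rfl
      have h2' : φB t = B := hφBtop t (le_of_eq hB)
      rw [h1', h2']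
      exact Set.union_eq_self_of_subset_left (by simpa using hxB)
    exact ⟨(0, t), hBZ, hjB⟩
  · rintro E ⟨p, hpZ, rfl⟩
    refine ⟨hpZ.2, ?_, ?_⟩
    · rw [hjcs]
      exact Or.inl (hφAx p.1)
    · rw [hjcs]
      exact Set.union_subset_union (hφAsub p.1) (hφBsub p.2)

/-! ### Whitney levels of subcontinua are continua -/

lemma level_props (Y : Hyperspace X) {t : ℝ} (ht0 : 0 < t) (htY : t ≤ μ Y) :
    IsCompact {E : Hyperspace X | cs E ⊆ cs Y ∧ μ E = t} ∧
    IsConnected {E : Hyperspace X | cs E ⊆ cs Y ∧ μ E = t} := by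
  set ℒ := {E : Hyperspace X | cs E ⊆ cs Y ∧ μ E = t} with hℒdef
  have hℒclosed : IsClosed ℒ := by
    have he : ℒ = {E | cs E ⊆ cs Y} ∩ {E | μ E = t} := rfl
    rw [he]
    exact (isClosed_subsets (cs_closed Y)).inter (isClosed_eq hμcont continuous_const)
  have hℒcompact : IsCompact ℒ := hℒclosed.isCompact
  have hℒne : ℒ.Nonempty := by
    obtain ⟨y, hy⟩ := cs_ne Y
    obtain ⟨C, _, hC2, hC3⟩ := exists_growth_point hμcont hμ0 hμmono Y hy ht0.le htY
    exact ⟨C, hC2, hC3⟩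
  refine ⟨hℒcompact, hℒne, ?_⟩
  intro U V hU hV hcov hUne hVne
  by_contra hcon
  rw [Set.not_nonempty_iff_eq_empty] at hcon
  set M := ℒ ∩ Vᶜ with hMdef
  set N := ℒ ∩ Uᶜ with hNdef
  have hMclosed : IsClosed M := hℒclosed.inter hV.isClosed_compl
  have hNclosed : IsClosed N := hℒclosed.inter hU.isClosed_compl
  have hMN : ℒ ⊆ M ∪ N := by
    intro E hE
    rcases hcov hE with h | h
    · left
      refine ⟨hE, fun hEV => ?_⟩
      have : E ∈ ℒ ∩ (U ∩ V) := ⟨hE, h, hEV⟩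
      rw [hcon] at this; exact this
    · by_cases hEU : E ∈ U
      · have : E ∈ ℒ ∩ (U ∩ V) := ⟨hE, hEU, h⟩
        rw [hcon] at this; exact this.elim
      · exact Or.inr ⟨hE, hEU⟩
  have hMne : M.Nonempty := by
    obtain ⟨E, hEℒ, hEU⟩ := hUne
    refine ⟨E, hEℒ, fun hEV => ?_⟩
    have : E ∈ ℒ ∩ (U ∩ V) := ⟨hEℒ, hEU, hEV⟩
    rw [hcon] at this; exact this
  have hNne : N.Nonempty := by
    obtain ⟨E, hEℒ, hEV⟩ := hVne
    refine ⟨E, hEℒ, fun hEU => ?_⟩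
    have : E ∈ ℒ ∩ (U ∩ V) := ⟨hEℒ, hEU, hEV⟩
    rw [hcon] at this; exact this
  set uM := hUnion M with huMdef
  set uN := hUnion N with huNdef
  have huMc : IsCompact uM := hUnion_isCompact hMclosed.isCompact
  have huNc : IsCompact uN := hUnion_isCompact hNclosed.isCompact
  have hcover : cs Y ⊆ uM ∪ uN := by
    intro y hy
    obtain ⟨C, hC1, hC2, hC3⟩ := exists_growth_point hμcont hμ0 hμmono Y hy ht0.le htY
    have hCℒ : C ∈ ℒ := ⟨hC2, hC3⟩
    rcases hMN hCℒ with h | h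
    · exact Or.inl (subset_hUnion h hC1)
    · exact Or.inr (subset_hUnion h hC1)
  have hInterNe : (uM ∩ uN).Nonempty := by
    by_contra hemp
    rw [Set.not_nonempty_iff_eq_empty] at hemp
    apply preconn_partition (cs_conn Y).2 hcover huMc.isClosed huNc.isClosed
    · intro y _ hy1 hy2
      have : y ∈ uM ∩ uN := ⟨hy1, hy2⟩
      rw [hemp] at this; exact this
    · obtain ⟨E, hEM⟩ := hMne
      obtain ⟨y, hy⟩ := cs_ne E
      exact ⟨y, (hEM.1.1 : cs E ⊆ cs Y) hy, subset_hUnion hEM hy⟩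
    · obtain ⟨E, hEN⟩ := hNne
      obtain ⟨y, hy⟩ := cs_ne E
      exact ⟨y, (hEN.1.1 : cs E ⊆ cs Y) hy, subset_hUnion hEN hy⟩
  obtain ⟨y, hyM, hyN⟩ := hInterNe
  obtain ⟨SA, hSA, hymemA⟩ := hyM
  simp only [Set.mem_range] at hSA
  obtain ⟨A, rfl⟩ := hSA
  simp only [Set.mem_iUnion] at hymemA
  obtain ⟨hAM, hyA⟩ := hymemA
  obtain ⟨SB, hSB, hymemB⟩ := hyN
  simp only [Set.mem_range] at hSB
  obtain ⟨B, rfl⟩ := hSB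
  simp only [Set.mem_iUnion] at hymemB
  obtain ⟨hBN, hyB⟩ := hymemB
  have hAU : A ∈ U := by
    rcases hcov hAM.1 with h | h
    · exact h
    · exact absurd h hAM.2
  have hBV : B ∈ V := by
    rcases hcov hBN.1 with h | h
    · exact absurd h hBN.2
    · exact h
  obtain ⟨Γ, hΓc, hΓconn, hAΓ, hBΓ, hΓprops⟩ :=
    gamma_exists hμcont hμ0 hμmono A B hAM.1.2 hBN.1.2 hyA hyB
  have hΓℒ : Γ ⊆ ℒ := by
    intro E hE
    obtain ⟨hEμ, _, hEsub⟩ := hΓprops E hE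
    exact ⟨hEsub.trans (Set.union_subset hAM.1.1 hBN.1.1), hEμ⟩
  obtain ⟨E, hEΓ, hEUV⟩ := hΓconn.2 U V hU hV (hΓℒ.trans (fun E hE => hcov hE))
    ⟨A, hAΓ, hAU⟩ ⟨B, hBΓ, hBV⟩
  have : E ∈ ℒ ∩ (U ∩ V) := ⟨hΓℒ hEΓ, hEUV⟩
  rw [hcon] at this; exact this

/-- Small nondegenerate subcontinua through a point avoiding a closed set. -/
lemma exists_small (A : Hyperspace X) {w : X} (hw : w ∈ cs A) (hμA : 0 < μ A)
    {S : Set X} (hS : IsClosed S) (hwS : w ∉ S) :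
    ∃ K : Hyperspace X, w ∈ cs K ∧ cs K ⊆ cs A ∧ (cs K).Nontrivial ∧
      Disjoint (cs K) S := by
  rcases Set.eq_empty_or_nonempty S with rfl | hSne
  · exact ⟨A, hw, subset_rfl, nontrivial_of_μpos hμcont hμ0 hμmono hμA, by simp⟩
  have hr : 0 < infDist w S := (hS.notMem_iff_infDist_pos hSne).1 hwS
  set r := infDist w S with hrdef
  have hseq : ∀ n : ℕ, ∃ C : Hyperspace X,
      w ∈ cs C ∧ cs C ⊆ cs A ∧ μ C = μ A / (n + 2) := by
    intro n
    apply exists_growth_point hμcont hμ0 hμmono A hw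
    · positivity
    · rw [div_le_iff₀ (by positivity)]
      nlinarith [hμA]
  choose E hEw hEA hEμ using hseq
  have hclaim : ∃ n, cs (E n) ⊆ Metric.ball w r := by
    by_contra hcon
    push_neg at hcon
    have hch : ∀ n, ∃ z, z ∈ cs (E n) ∧ z ∉ Metric.ball w r := by
      intro n
      obtain ⟨z, hz1, hz2⟩ := Set.not_subset.1 (hcon n)
      exact ⟨z, hz1, hz2⟩
    choose z hz hzball using hch
    obtain ⟨q, ms, hms, hconv⟩ :=
      CompactSpace.tendsto_subseq (fun n => ((E n, z n) : Hyperspace X × X))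
    have hE' : Tendsto (fun n => E (ms n)) atTop (nhds q.1) :=
      ((continuous_fst.tendsto q).comp hconv)
    have hz' : Tendsto (fun n => z (ms n)) atTop (nhds q.2) :=
      ((continuous_snd.tendsto q).comp hconv)
    have hyE : q.2 ∈ cs q.1 := mem_limit hE' (fun n => hz (ms n)) hz'
    have hwE : w ∈ cs q.1 := mem_limit_const hE' fun n => hEw (ms n)
    have hμq : μ q.1 = 0 := by
      have h1' : Tendsto (fun n => μ (E (ms n))) atTop (nhds (μ q.1)) :=
        (hμcont.tendsto q.1).comp hE'
      have h2' : Tendsto (fun n => μ (E (ms n))) atTop (nhds 0) := by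
        have hbase : Tendsto (fun n : ℕ => μ A / ((n : ℝ) + 2)) atTop (nhds 0) := by
          apply Tendsto.div_atTop (tendsto_const_nhds)
          exact tendsto_atTop_add_const_right _ 2 tendsto_natCast_atTop_atTop
        have : Tendsto (fun n => μ A / ((ms n : ℝ) + 2)) atTop (nhds 0) :=
          hbase.comp hms.tendsto_atTop
        simpa only [hEμ] using this
      exact tendsto_nhds_unique h1' h2'
    have hsub : (cs q.1).Subsingleton := by
      by_contra hnt
      rw [Set.not_subsingleton_iff] at hnt
      exact absurd hμq (μpos_of_nontrivial hμcont hμ0 hμmono hnt).ne'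
    have hqw : q.2 = w := hsub hyE hwE
    have hge : r ≤ dist q.2 w := by
      have : ∀ n, r ≤ dist (z (ms n)) w := by
        intro n
        have := hzball (ms n)
        rw [Metric.mem_ball, not_lt] at this
        exact this
      have hdconv : Tendsto (fun n => dist (z (ms n)) w) atTop (nhds (dist q.2 w)) :=
        (continuous_dist.comp (continuous_id.prodMk continuous_const)).tendsto q.2 |>.comp hz'
      exact ge_of_tendsto hdconv (Filter.Eventually.of_forall this)
    rw [hqw, dist_self] at hge
    linarith
  obtain ⟨n, hn⟩ := hclaim
  refine ⟨E n, hEw n, hEA n, ?_, ?_⟩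
  · apply nontrivial_of_μpos hμcont hμ0 hμmono
    rw [hEμ n]
    positivity
  · rw [Set.disjoint_left]
    intro x hxK hxS
    have h1' : dist x w < r := by
      have := hn hxK
      rwa [Metric.mem_ball] at this
    have h2' : r ≤ dist w x := infDist_le_dist_of_mem hxS
    rw [dist_comm] at h2'
    linarith

/-- The main construction: the D-property inside a Whitney level. -/
lemma main_D {t : ℝ} (ht0 : 0 < t) (hX : DSpace X)
    {𝒜 ℬ : Set (Hyperspace X)}
    (h𝒜lvl : ∀ A ∈ 𝒜, μ A = t) (hℬlvl : ∀ B ∈ ℬ, μ B = t)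
    (h𝒜c : IsCompact 𝒜) (h𝒜conn : IsConnected 𝒜) (h𝒜nt : 𝒜.Nontrivial)
    (hℬc : IsCompact ℬ) (hℬconn : IsConnected ℬ) (hℬnt : ℬ.Nontrivial)
    (hABdisj : Disjoint 𝒜 ℬ) :
    ∃ 𝒞 : Set (Hyperspace X), (∀ E ∈ 𝒞, μ E = t) ∧ IsCompact 𝒞 ∧ IsConnected 𝒞 ∧
      (𝒜 ∩ 𝒞).Nonempty ∧ (ℬ ∩ 𝒞).Nonempty ∧ ((𝒜 ∪ ℬ) \ 𝒞).Nonempty := by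
  have hns : ∀ A1 A2 : Hyperspace X, μ A1 = t → μ A2 = t → A1 ≠ A2 →
      ∃ w, w ∈ cs A2 ∧ w ∉ cs A1 := by
    intro A1 A2 h1 h2 hne
    by_contra h
    push_neg at h
    exact hne (eq_of_subset_of_μeq hμcont hμ0 hμmono (fun w hw => h w hw)
      (h2.trans h1.symm)).symm
  by_cases hmeet : ∃ A ∈ 𝒜, ∃ B ∈ ℬ, (cs A ∩ cs B).Nonempty
  · -- Case II: some pair of elements meet
    obtain ⟨A, hA, B, hB, x, hxA, hxB⟩ := hmeet
    by_cases hbad : ∀ A' ∈ 𝒜, ∀ B' ∈ ℬ, ∀ x' ∈ cs A' ∩ cs B', ∀ W ∈ 𝒜 ∪ ℬ,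
        x' ∈ cs W ∧ cs W ⊆ cs A' ∪ cs B'
    · exfalso
      obtain ⟨A1, hA1, A2, hA2, hA12ne⟩ := h𝒜nt
      have hxA1 : x ∈ cs A1 :=
        (hbad A hA B hB x ⟨hxA, hxB⟩ A1 (Or.inl hA1)).1
      have hA2sub : cs A2 ⊆ cs A1 ∪ cs B :=
        (hbad A1 hA1 B hB x ⟨hxA1, hxB⟩ A2 (Or.inl hA2)).2
      have hA2B : ∀ y ∈ cs A2 ∩ cs B, y ∈ cs A1 := by
        intro y hy
        exact (hbad A2 hA2 B hB y hy A1 (Or.inl hA1)).1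
      have hsub : cs A2 ⊆ cs A1 := by
        intro y hy
        rcases hA2sub hy with h | h
        · exact h
        · exact hA2B y ⟨hy, h⟩
      have : A2 = A1 := eq_of_subset_of_μeq hμcont hμ0 hμmono hsub
        ((h𝒜lvl A2 hA2).trans (h𝒜lvl A1 hA1).symm)
      exact hA12ne this.symm
    · push_neg at hbad
      obtain ⟨A', hA', B', hB', x', hx', W, hW, hWbad⟩ := hbad
      obtain ⟨Γ, hΓc, hΓconn, hA'Γ, hB'Γ, hΓprops⟩ :=
        gamma_exists hμcont hμ0 hμmono A' B' (h𝒜lvl A' hA') (hℬlvl B' hB') hx'.1 hx'.2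
      refine ⟨Γ, fun E hE => (hΓprops E hE).1, hΓc, hΓconn,
        ⟨A', hA', hA'Γ⟩, ⟨B', hB', hB'Γ⟩, ⟨W, hW, ?_⟩⟩
      intro hWΓ
      obtain ⟨_, hWx, hWsub⟩ := hΓprops W hWΓ
      exact absurd hWsub (hWbad hWx)
  · -- Case I: all pairs are disjoint
    push_neg at hmeet
    have hmeet' : ∀ A ∈ 𝒜, ∀ B ∈ ℬ, cs A ∩ cs B = ∅ := hmeet
    obtain ⟨A1, hA1, A2, hA2, hA12ne⟩ := h𝒜nt
    obtain ⟨B1, hB1, B2, hB2, hB12ne⟩ := hℬnt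
    obtain ⟨w, hwA2, hwA1⟩ := hns A1 A2 (h𝒜lvl _ hA1) (h𝒜lvl _ hA2) hA12ne
    obtain ⟨v, hvB2, hvB1⟩ := hns B1 B2 (hℬlvl _ hB1) (hℬlvl _ hB2) hB12ne
    have hμA2 : 0 < μ A2 := by rw [h𝒜lvl _ hA2]; exact ht0
    have hμB2 : 0 < μ B2 := by rw [hℬlvl _ hB2]; exact ht0
    obtain ⟨K, hKw, hKA2, hKnt, hKA1⟩ :=
      exists_small hμcont hμ0 hμmono A2 hwA2 hμA2 (cs_closed A1) hwA1
    obtain ⟨L, hLv, hLB2, hLnt, hLB1⟩ :=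
      exists_small hμcont hμ0 hμmono B2 hvB2 hμB2 (cs_closed B1) hvB1
    have hKLdisj : Disjoint (cs K) (cs L) := by
      rw [Set.disjoint_left]
      intro p hpK hpL
      have : p ∈ cs A2 ∩ cs B2 := ⟨hKA2 hpK, hLB2 hpL⟩
      rw [hmeet' A2 hA2 B2 hB2] at this
      exact this
    obtain ⟨C, hCc, hCconn, hCK, hCL, z, hzKL, hzC⟩ :=
      hX (cs K) (cs L) (cs_compact K) (cs_conn K) hKnt
        (cs_compact L) (cs_conn L) hLnt hKLdisj
    by_cases hwin : ∃ D : Hyperspace X, ∃ A0 ∈ 𝒜, ∃ B0 ∈ ℬ,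
        cs A0 ⊆ cs D ∧ cs B0 ⊆ cs D ∧
          ∃ y, (y ∈ hUnion 𝒜 ∨ y ∈ hUnion ℬ) ∧ y ∉ cs D
    · obtain ⟨D, A0, hA0, B0, hB0, hA0D, hB0D, y, hy, hyD⟩ := hwin
      have htD : t ≤ μ D := by
        rw [← h𝒜lvl _ hA0]
        exact mono' hμcont hμ0 hμmono hA0D
      obtain ⟨hLc, hLconn⟩ := level_props hμcont hμ0 hμmono D ht0 htD
      refine ⟨{E : Hyperspace X | cs E ⊆ cs D ∧ μ E = t}, fun E hE => hE.2, hLc, hLconn,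
        ⟨A0, hA0, hA0D, h𝒜lvl _ hA0⟩, ⟨B0, hB0, hB0D, hℬlvl _ hB0⟩, ?_⟩
      rcases hy with hy | hy
      · obtain ⟨S, hS, hmem⟩ := hy
        simp only [Set.mem_range] at hS
        obtain ⟨E, rfl⟩ := hS
        simp only [Set.mem_iUnion] at hmem
        obtain ⟨hE𝒜, hyE⟩ := hmem
        exact ⟨E, Or.inl hE𝒜, fun hEL => hyD (hEL.1 hyE)⟩
      · obtain ⟨S, hS, hmem⟩ := hy
        simp only [Set.mem_range] at hS
        obtain ⟨E, rfl⟩ := hS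
        simp only [Set.mem_iUnion] at hmem
        obtain ⟨hEℬ, hyE⟩ := hmem
        exact ⟨E, Or.inr hEℬ, fun hEL => hyD (hEL.1 hyE)⟩
    · exfalso
      push_neg at hwin
      -- C meets A2 and B2
      obtain ⟨p, hpK, hpC⟩ := hCK
      obtain ⟨q, hqL, hqC⟩ := hCL
      -- the big continuum D2
      have hconnCB2 : IsConnected (C ∪ cs B2) :=
        hCconn.union ⟨q, hqC, hLB2 hqL⟩ (cs_conn B2)
      have hconnD2 : IsConnected (cs A2 ∪ (C ∪ cs B2)) :=
        (cs_conn A2).union ⟨p, hKA2 hpK, Or.inl hpC⟩ hconnCB2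
      set D2 := mkH (cs A2 ∪ (C ∪ cs B2))
        ((cs_compact A2).union (hCc.union (cs_compact B2))) hconnD2 with hD2def
      have hD2mem : ∀ y, (y ∈ hUnion 𝒜 ∨ y ∈ hUnion ℬ) → y ∈ cs D2 := by
        intro y hy
        exact hwin D2 A2 hA2 B2 hB2 (by rw [hD2def, cs_mkH]; exact Set.subset_union_left)
          (by rw [hD2def, cs_mkH]
              exact Set.subset_union_right.trans
                (Set.union_subset_union subset_rfl subset_rfl) |>.trans
                  (Set.subset_union_right)) y hy
      have hA1C : (cs A1 ∩ C).Nonempty := by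
        by_contra hemp
        rw [Set.not_nonempty_iff_eq_empty] at hemp
        have hsub : cs A1 ⊆ cs A2 := by
          intro y hy
          have hyD2 : y ∈ cs D2 :=
            hD2mem y (Or.inl (subset_hUnion hA1 hy))
          rw [hD2def, cs_mkH] at hyD2
          rcases hyD2 with h | h
          · exact h
          · rcases h with h | h
            · exfalso
              have : y ∈ cs A1 ∩ C := ⟨hy, h⟩
              rw [hemp] at this; exact this
            · exfalso
              have : y ∈ cs A1 ∩ cs B2 := ⟨hy, h⟩
              rw [hmeet' A1 hA1 B2 hB2] at this; exact this
        exact hA12ne (eq_of_subset_of_μeq hμcont hμ0 hμmono hsub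
          ((h𝒜lvl _ hA1).trans (h𝒜lvl _ hA2).symm))
      have hB1C : (cs B1 ∩ C).Nonempty := by
        by_contra hemp
        rw [Set.not_nonempty_iff_eq_empty] at hemp
        have hsub : cs B1 ⊆ cs B2 := by
          intro y hy
          have hyD2 : y ∈ cs D2 :=
            hD2mem y (Or.inr (subset_hUnion hB1 hy))
          rw [hD2def, cs_mkH] at hyD2
          rcases hyD2 with h | h
          · exfalso
            have : y ∈ cs B1 ∩ cs A2 := ⟨hy, h⟩
            have h2 : y ∈ cs A2 ∩ cs B1 := ⟨this.2, this.1⟩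
            rw [hmeet' A2 hA2 B1 hB1] at h2; exact h2
          · rcases h with h | h
            · exfalso
              have : y ∈ cs B1 ∩ C := ⟨hy, h⟩
              rw [hemp] at this; exact this
            · exact h
        exact hB12ne (eq_of_subset_of_μeq hμcont hμ0 hμmono hsub
          ((hℬlvl _ hB1).trans (hℬlvl _ hB2).symm))
      obtain ⟨p1, hp1A1, hp1C⟩ := hA1C
      obtain ⟨q1, hq1B1, hq1C⟩ := hB1C
      have hconnCB1 : IsConnected (C ∪ cs B1) :=
        hCconn.union ⟨q1, hq1C, hq1B1⟩ (cs_conn B1)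
      have hconnD1 : IsConnected (cs A1 ∪ (C ∪ cs B1)) :=
        (cs_conn A1).union ⟨p1, hp1A1, Or.inl hp1C⟩ hconnCB1
      set D1 := mkH (cs A1 ∪ (C ∪ cs B1))
        ((cs_compact A1).union (hCc.union (cs_compact B1))) hconnD1 with hD1def
      have hD1mem : ∀ y, (y ∈ hUnion 𝒜 ∨ y ∈ hUnion ℬ) → y ∈ cs D1 := by
        intro y hy
        exact hwin D1 A1 hA1 B1 hB1 (by rw [hD1def, cs_mkH]; exact Set.subset_union_left)
          (by rw [hD1def, cs_mkH]
              exact Set.subset_union_right.trans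
                (Set.union_subset_union subset_rfl subset_rfl) |>.trans
                  (Set.subset_union_right)) y hy
      rcases hzKL with hz | hz
      · -- z ∈ K ⊆ A2
        have hzD1 : z ∈ cs D1 :=
          hD1mem z (Or.inl (subset_hUnion hA2 (hKA2 hz)))
        rw [hD1def, cs_mkH] at hzD1
        rcases hzD1 with h | h
        · exact Set.disjoint_left.mp hKA1 hz h
        · rcases h with h | h
          · exact hzC h
          · have : z ∈ cs A2 ∩ cs B1 := ⟨hKA2 hz, h⟩
            rw [hmeet' A2 hA2 B1 hB1] at this; exact this
      · -- z ∈ L ⊆ B2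
        have hzD1 : z ∈ cs D1 :=
          hD1mem z (Or.inr (subset_hUnion hB2 (hLB2 hz)))
        rw [hD1def, cs_mkH] at hzD1
        rcases hzD1 with h | h
        · have : z ∈ cs A1 ∩ cs B2 := ⟨h, hLB2 hz⟩
          rw [hmeet' A1 hA1 B2 hB2] at this; exact this
        · rcases h with h | h
          · exact hzC h
          · exact Set.disjoint_left.mp hLB1 hz h

end Whitney

end DWhitney

theorem d_whitney_property (X : Type*) [MetricSpace X] [CompactSpace X]
    [ConnectedSpace X] (hX : DSpace X)
    (μ : Hyperspace X → ℝ) (hμcont : Continuous μ)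
    (hμ0 : ∀ A : Hyperspace X, (A.1 : Set X).Subsingleton → μ A = 0)
    (hμmono : ∀ A B : Hyperspace X, (A.1 : Set X) ⊂ (B.1 : Set X) → μ A < μ B)
    (t : ℝ) (ht0 : 0 < t)
    (httop : t < μ ⟨⟨⟨Set.univ, isCompact_univ⟩, Set.univ_nonempty⟩, isConnected_univ⟩) :
    CompactSpace {A : Hyperspace X // μ A = t} ∧
      ConnectedSpace {A : Hyperspace X // μ A = t} ∧
      DSpace {A : Hyperspace X // μ A = t} := by
  classical
  have hlevelclosed : IsClosed {A : Hyperspace X | μ A = t} :=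
    isClosed_eq hμcont continuous_const
  set Ω : Hyperspace X :=
    ⟨⟨⟨Set.univ, isCompact_univ⟩, Set.univ_nonempty⟩, isConnected_univ⟩ with hΩdef
  have htY : t ≤ μ Ω := httop.le
  obtain ⟨hLc, hLconn⟩ := DWhitney.level_props hμcont hμ0 hμmono Ω ht0 htY
  have hset : {E : Hyperspace X | DWhitney.cs E ⊆ DWhitney.cs Ω ∧ μ E = t} =
      {A : Hyperspace X | μ A = t} := by
    ext E
    constructor
    · rintro ⟨_, h⟩; exact h
    · intro h; exact ⟨Set.subset_univ _, h⟩
  rw [hset] at hLconn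
  refine ⟨?_, ?_, ?_⟩
  · exact isCompact_iff_compactSpace.mp hlevelclosed.isCompact
  · exact Subtype.connectedSpace hLconn
  · intro 𝒜s ℬs h𝒜c h𝒜conn h𝒜nt hℬc hℬconn hℬnt hdisj
    set 𝒜 : Set (Hyperspace X) := Subtype.val '' 𝒜s with h𝒜def
    set ℬ : Set (Hyperspace X) := Subtype.val '' ℬs with hℬdef
    have h𝒜lvl : ∀ A ∈ 𝒜, μ A = t := by rintro A ⟨a, _, rfl⟩; exact a.2
    have hℬlvl : ∀ B ∈ ℬ, μ B = t := by rintro B ⟨b, _, rfl⟩; exact b.2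
    have h𝒜c' : IsCompact 𝒜 := h𝒜c.image continuous_subtype_val
    have hℬc' : IsCompact ℬ := hℬc.image continuous_subtype_val
    have h𝒜conn' : IsConnected 𝒜 := h𝒜conn.image _ continuous_subtype_val.continuousOn
    have hℬconn' : IsConnected ℬ := hℬconn.image _ continuous_subtype_val.continuousOn
    have h𝒜nt' : 𝒜.Nontrivial := by
      obtain ⟨a, ha, b, hb, hab⟩ := h𝒜nt
      exact ⟨a.1, ⟨a, ha, rfl⟩, b.1, ⟨b, hb, rfl⟩, fun h => hab (Subtype.ext h)⟩
    have hℬnt' : ℬ.Nontrivial := by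
      obtain ⟨a, ha, b, hb, hab⟩ := hℬnt
      exact ⟨a.1, ⟨a, ha, rfl⟩, b.1, ⟨b, hb, rfl⟩, fun h => hab (Subtype.ext h)⟩
    have hdisj' : Disjoint 𝒜 ℬ := by
      rw [Set.disjoint_left]
      rintro A ⟨a, ha, rfl⟩ ⟨b, hb, hba⟩
      have hba' : a = b := Subtype.ext hba.symm
      exact Set.disjoint_left.mp hdisj ha (by rw [hba']; exact hb)
    obtain ⟨𝒞, h𝒞lvl, h𝒞c, h𝒞conn, h𝒞A, h𝒞B, h𝒞om⟩ :=
      DWhitney.main_D hμcont hμ0 hμmono ht0 hX h𝒜lvl hℬlvl h𝒜c' h𝒜conn' h𝒜nt'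
        hℬc' hℬconn' hℬnt' hdisj'
    have hsubrange : 𝒞 ⊆ Set.range (Subtype.val : {A : Hyperspace X // μ A = t} →
        Hyperspace X) := fun E hE => ⟨⟨E, h𝒞lvl E hE⟩, rfl⟩
    set 𝒞s : Set {A : Hyperspace X // μ A = t} := Subtype.val ⁻¹' 𝒞 with h𝒞sdef
    have himg : Subtype.val '' 𝒞s = 𝒞 := Set.image_preimage_eq_of_subset hsubrange
    have hrangeclosed : IsClosed (Set.range (Subtype.val : {A : Hyperspace X // μ A = t} →
        Hyperspace X)) := by
      rw [Subtype.range_coe_subtype]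
      exact hlevelclosed
    refine ⟨𝒞s, ?_, ?_, ?_, ?_, ?_⟩
    · exact Topology.IsInducing.subtypeVal.isCompact_preimage hrangeclosed h𝒞c
    · constructor
      · obtain ⟨E, hE𝒜, hE𝒞⟩ := h𝒞A
        obtain ⟨a, _, rfl⟩ := hE𝒜
        exact ⟨a, hE𝒞⟩
      · refine Topology.IsInducing.subtypeVal.isPreconnected_image.mp ?_
        convert h𝒞conn.2 using 1
        exact himg
    · obtain ⟨E, hE𝒜, hE𝒞⟩ := h𝒞A
      obtain ⟨a, ha, rfl⟩ := hE𝒜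
      exact ⟨a, ha, hE𝒞⟩
    · obtain ⟨E, hEℬ, hE𝒞⟩ := h𝒞B
      obtain ⟨b, hb, rfl⟩ := hEℬ
      exact ⟨b, hb, hE𝒞⟩
    · obtain ⟨W, hWun, hW𝒞⟩ := h𝒞om
      rcases hWun with hW | hW
      · obtain ⟨a, ha, rfl⟩ := hW
        exact ⟨a, Or.inl ha, fun h => hW𝒞 h⟩
      · obtain ⟨b, hb, rfl⟩ := hW
        exact ⟨b, Or.inr hb, fun h => hW𝒞 h⟩
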